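/- Let φ be an oracle for a point x in an effective topology (B, ν) with a recursively enumerable subset relation. Then there exists a nested oracle ψ for x in (B, ν) that is recursive relative to φ, uniformly in φ. -/

import Mathlib

/-- Cantor's pairing function `⟨x,y⟩ = (x² + 2xy + y² + 3x + y)/2`. -/
def cantorPair (x y : ℕ) : ℕ := (x * x + 2 * x * y + y * y + 3 * x + y) / 2

/-- Partial functions `ℕ →. ℕ` that are computable uniformly relative to an oracle:
`PartrecIn F` says that the functional `O ↦ F O` is computed by a single oracle machine,
so that `F O` is partial recursive relative to `O`, uniformly in the oracle `O`. -/
inductive PartrecIn : ((ℕ →. ℕ) → ℕ →. ℕ) → Prop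
  | oracle : PartrecIn fun O => O
  | zero : PartrecIn fun _ => pure 0
  | succ : PartrecIn fun _ => ↑Nat.succ
  | left : PartrecIn fun _ => ↑fun n : ℕ => n.unpair.1
  | right : PartrecIn fun _ => ↑fun n : ℕ => n.unpair.2
  | pair {F G} : PartrecIn F → PartrecIn G →
      PartrecIn fun O n => Nat.pair <$> F O n <*> G O n
  | comp {F G} : PartrecIn F → PartrecIn G →
      PartrecIn fun O n => G O n >>= F O
  | prec {F G} : PartrecIn F → PartrecIn G →
      PartrecIn fun O => Nat.unpaired fun a n =>
        n.rec (F O a) fun y IH => do let i ← IH; G O (Nat.pair a (Nat.pair y i))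
  | rfind {F} : PartrecIn F →
      PartrecIn fun O a => Nat.rfind fun n => (fun m => m = 0) <$> F O (Nat.pair a n)

/-- `L` is a local basis for the point `x` with respect to the basis `Bas`. -/
def IsLocalBasis {X : Type*} (Bas : Set (Set X)) (L : Set (Set X)) (x : X) : Prop :=
  L ⊆ Bas ∧ (∀ l ∈ L, x ∈ l) ∧ ∀ b ∈ Bas, x ∈ b → ∃ l ∈ L, l ⊆ b

/-- `φ : ℕ → dom` is an oracle for the point `x` in the effective topology whose basis
is coded by `code` on the domain `dom`: the image under `code` of the range of `φ`
is a local basis for `x`. -/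
def IsOracleFor {X : Type*} (dom : Set ℕ) (code : ℕ → Set X) (x : X) (φ : ℕ → ℕ) : Prop :=
  (∀ n, φ n ∈ dom) ∧ IsLocalBasis (code '' dom) (code '' Set.range φ) x

/-- An oracle is nested iff the coded basis elements are decreasing along its values. -/
def IsNestedOracleFor {X : Type*} (dom : Set ℕ) (code : ℕ → Set X) (x : X)
    (φ : ℕ → ℕ) : Prop :=
  IsOracleFor dom code x φ ∧ ∀ n, code (φ (n + 1)) ⊆ code (φ n)

/-- The effective topology `(B, ν)` (with `B = code '' dom`) has a recursively
enumerable subset relation. -/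
def RESubsetRel {X : Type*} (dom : Set ℕ) (code : ℕ → Set X) : Prop :=
  REPred fun p : ℕ =>
    ∃ b₁ ∈ dom, ∃ b₂ ∈ dom, p = cantorPair b₁ b₂ ∧ code b₁ ⊆ code b₂

theorem PartrecIn.of_eq {F G} (hF : PartrecIn F) (H : ∀ O n, F O n = G O n) : PartrecIn G := by
  have h : F = G := funext fun O => funext fun n => H O n
  exact h ▸ hF

theorem PartrecIn.of_partrec {f : ℕ →. ℕ} (hf : Nat.Partrec f) : PartrecIn fun _ => f := by
  induction hf with
  | zero => exact PartrecIn.zero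
  | succ => exact PartrecIn.succ
  | left => exact PartrecIn.left
  | right => exact PartrecIn.right
  | pair _ _ ihf ihg => exact PartrecIn.pair ihf ihg
  | comp _ _ ihf ihg => exact PartrecIn.comp ihf ihg
  | prec _ _ ihf ihg => exact PartrecIn.prec ihf ihg
  | rfind _ ih => exact PartrecIn.rfind ih

theorem PartrecIn.of_primrec {f : ℕ → ℕ} (hf : Primrec f) : PartrecIn fun _ => ↑f :=
  of_partrec (Nat.Partrec.of_primrec (Primrec.nat_iff.mp hf))

theorem PartrecIn.oracle_comp {f : ℕ → ℕ} (hf : Primrec f) : PartrecIn fun O n => O (f n) :=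
  (PartrecIn.comp PartrecIn.oracle (of_primrec hf)).of_eq fun O n => by
    simp [PFun.coe_val]; exact Part.bind_some _ _

/-! ### Cantor pairing lemmas -/

lemma two_mul_cantorPair (x y : ℕ) :
    2 * cantorPair x y = x * x + 2 * x * y + y * y + 3 * x + y := by
  have hdvd : 2 ∣ x * x + 2 * x * y + y * y + 3 * x + y := by
    have h : x * x + 2 * x * y + y * y + 3 * x + y
        = x * (x + 1) + y * (y + 1) + 2 * (x * y + x) := by ring
    rw [h]
    exact Nat.dvd_add (Nat.dvd_add (Nat.even_mul_succ_self x).two_dvd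
      (Nat.even_mul_succ_self y).two_dvd) ⟨x * y + x, rfl⟩
  unfold cantorPair
  exact Nat.mul_div_cancel' hdvd

lemma cantorPair_inj {a b x y : ℕ} (h : cantorPair a b = cantorPair x y) :
    a = x ∧ b = y := by
  have h2 : a * a + 2 * a * b + b * b + 3 * a + b
      = x * x + 2 * x * y + y * y + 3 * x + y := by
    rw [← two_mul_cantorPair, ← two_mul_cantorPair, h]
  have key : (a + b) * (a + b) + (a + b) + 2 * a
      = (x + y) * (x + y) + (x + y) + 2 * x := by ring_nf; ring_nf at h2; omega
  rcases lt_trichotomy (a + b) (x + y) with hlt | heq | hgt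
  · exfalso
    have h1 : (a + b) * (a + b) + (a + b) + 2 * a ≤ (a + b) * (a + b) + 3 * (a + b) := by
      have : a ≤ a + b := Nat.le_add_right a b
      nlinarith
    have h3 : (a + b + 1) * (a + b + 1) ≤ (x + y) * (x + y) :=
      Nat.mul_le_mul hlt hlt
    nlinarith
  · constructor
    · have := heq ▸ key
      omega
    · have h4 : a = x := by have := heq ▸ key; omega
      omega
  · exfalso
    have h1 : (x + y) * (x + y) + (x + y) + 2 * x ≤ (x + y) * (x + y) + 3 * (x + y) := by
      have : x ≤ x + y := Nat.le_add_right x y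
      nlinarith
    have h3 : (x + y + 1) * (x + y + 1) ≤ (a + b) * (a + b) :=
      Nat.mul_le_mul hgt hgt
    nlinarith

/-! ### The oracle machine -/

open Nat.Partrec.Code in
/-- Numeric check function: `w = ⟪⟪q, s⟫, ⟪b₁, b₂⟫⟫` with `q = ⟪a, ⟪y, i⟫⟫`, `s = ⟪m, t⟫`.
Returns `0` iff `evaln` certifies (within `t` steps) that the subset relation holds for
`⟪b₁, i⟫` and for `⟪b₁, b₂⟫`. -/
def cval (c : Nat.Partrec.Code) (w : ℕ) : ℕ :=
  bif (evaln w.unpair.1.unpair.2.unpair.2 c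
        (cantorPair w.unpair.2.unpair.1 w.unpair.1.unpair.1.unpair.2.unpair.2)).isSome &&
      (evaln w.unpair.1.unpair.2.unpair.2 c
        (cantorPair w.unpair.2.unpair.1 w.unpair.2.unpair.2)).isSome
  then 0 else 1

lemma primrec_cantorPair : Primrec₂ cantorPair := by
  have hpoly : Primrec (fun p : ℕ × ℕ =>
      p.1 * p.1 + 2 * p.1 * p.2 + p.2 * p.2 + 3 * p.1 + p.2) :=
    Primrec.nat_add.comp
      (Primrec.nat_add.comp
        (Primrec.nat_add.comp
          (Primrec.nat_add.comp (Primrec.nat_mul.comp .fst .fst)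
            (Primrec.nat_mul.comp (Primrec.nat_mul.comp (.const 2) .fst) .snd))
          (Primrec.nat_mul.comp .snd .snd))
        (Primrec.nat_mul.comp (.const 3) .fst))
      .snd
  exact Primrec.nat_div.comp hpoly (.const 2)

lemma primrec_cval (c : Nat.Partrec.Code) : Primrec (cval c) := by
  have pu1 : Primrec fun n : ℕ => n.unpair.1 := Primrec.fst.comp Primrec.unpair
  have pu2 : Primrec fun n : ℕ => n.unpair.2 := Primrec.snd.comp Primrec.unpair
  have pt : Primrec fun w : ℕ => w.unpair.1.unpair.2.unpair.2 :=
    pu2.comp (pu2.comp pu1)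
  have pb1 : Primrec fun w : ℕ => w.unpair.2.unpair.1 := pu1.comp pu2
  have pb2 : Primrec fun w : ℕ => w.unpair.2.unpair.2 := pu2.comp pu2
  have pi : Primrec fun w : ℕ => w.unpair.1.unpair.1.unpair.2.unpair.2 :=
    pu2.comp (pu2.comp (pu1.comp pu1))
  have hev : Primrec fun p : ℕ × ℕ =>
      Nat.Partrec.Code.evaln p.1 c p.2 :=
    Nat.Partrec.Code.primrec_evaln.comp
      (Primrec.pair (Primrec.pair .fst (.const c)) .snd)
  have hA : Primrec fun w : ℕ => (Nat.Partrec.Code.evaln w.unpair.1.unpair.2.unpair.2 c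
      (cantorPair w.unpair.2.unpair.1 w.unpair.1.unpair.1.unpair.2.unpair.2)).isSome :=
    Primrec.option_isSome.comp (hev.comp (Primrec.pair pt (primrec_cantorPair.comp pb1 pi)))
  have hB : Primrec fun w : ℕ => (Nat.Partrec.Code.evaln w.unpair.1.unpair.2.unpair.2 c
      (cantorPair w.unpair.2.unpair.1 w.unpair.2.unpair.2)).isSome :=
    Primrec.option_isSome.comp (hev.comp (Primrec.pair pt (primrec_cantorPair.comp pb1 pb2)))
  exact Primrec.cond (Primrec.and.comp hA hB) (.const 0) (.const 1)

/-- The check functional: queries the oracle at `m = s.unpair.1` and at `y + 1`. -/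
def checkF (c : Nat.Partrec.Code) (O : ℕ →. ℕ) (u : ℕ) : Part ℕ :=
  (O u.unpair.2.unpair.1).bind fun b1 =>
    (O (u.unpair.1.unpair.2.unpair.1 + 1)).bind fun b2 =>
      Part.some (cval c (Nat.pair u (Nat.pair b1 b2)))

lemma partrecIn_checkF (c : Nat.Partrec.Code) : PartrecIn (checkF c) := by
  have pu1 : Primrec fun n : ℕ => n.unpair.1 := Primrec.fst.comp Primrec.unpair
  have pu2 : Primrec fun n : ℕ => n.unpair.2 := Primrec.snd.comp Primrec.unpair
  have hm : PartrecIn fun O (u : ℕ) => O u.unpair.2.unpair.1 :=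
    PartrecIn.oracle_comp (pu1.comp pu2)
  have hy : PartrecIn fun O (u : ℕ) => O (u.unpair.1.unpair.2.unpair.1 + 1) :=
    PartrecIn.oracle_comp (Primrec.succ.comp (pu1.comp (pu2.comp pu1)))
  have hid : PartrecIn fun (_ : ℕ →. ℕ) (u : ℕ) => (Part.some u : Part ℕ) :=
    PartrecIn.of_primrec Primrec.id
  have h := PartrecIn.comp (PartrecIn.of_primrec (primrec_cval c))
    (PartrecIn.pair hid (PartrecIn.pair hm hy))
  have hb : ∀ x : Part ℕ, x >>= (↑(cval c) : ℕ →. ℕ) = x.map (cval c) :=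
    fun x => Part.bind_some_eq_map _ _
  refine h.of_eq fun O u => Part.ext fun a => ?_
  simp only [checkF, Seq.seq, hb, Part.bind_eq_bind, Part.mem_bind_iff, Part.mem_map_iff,
    Part.mem_some_iff, PFun.coe_val]
  aesop

/-- One nesting step: search for `s = ⟪m, t⟫` passing the check, output `φ m`. -/
def stepF (c : Nat.Partrec.Code) (O : ℕ →. ℕ) (q : ℕ) : Part ℕ :=
  (Nat.rfind fun s => (fun m => m = 0) <$> checkF c O (Nat.pair q s)).bind
    fun s => O s.unpair.1

lemma partrecIn_stepF (c : Nat.Partrec.Code) : PartrecIn (stepF c) := by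
  have pu1 : Primrec fun n : ℕ => n.unpair.1 := Primrec.fst.comp Primrec.unpair
  have h := PartrecIn.comp (PartrecIn.oracle_comp pu1) (PartrecIn.rfind (partrecIn_checkF c))
  exact h.of_eq fun O q => rfl

/-- The full recursion. -/
def recF (c : Nat.Partrec.Code) (O : ℕ →. ℕ) : ℕ →. ℕ :=
  Nat.unpaired fun a n =>
    n.rec (O 0) fun y IH => IH.bind fun i => stepF c O (Nat.pair a (Nat.pair y i))

lemma partrecIn_recF (c : Nat.Partrec.Code) : PartrecIn (recF c) := by
  have hbase : PartrecIn fun O (_ : ℕ) => O 0 :=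
    (PartrecIn.comp PartrecIn.oracle PartrecIn.zero).of_eq fun O n => by
      simp [Pure.pure, PFun.pure, Part.bind_some]; exact Part.bind_some _ _
  have h := PartrecIn.prec hbase (partrecIn_stepF c)
  exact h.of_eq fun O n => rfl

/-- The oracle machine for the theorem. -/
def FF (c : Nat.Partrec.Code) (O : ℕ →. ℕ) (n : ℕ) : Part ℕ :=
  recF c O (Nat.pair 0 n)

lemma partrecIn_FF (c : Nat.Partrec.Code) : PartrecIn (FF c) := by
  have hp : Primrec fun n : ℕ => Nat.pair 0 n :=
    Primrec₂.natPair.comp (.const 0) .id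
  have h := PartrecIn.comp (partrecIn_recF c) (PartrecIn.of_primrec hp)
  exact h.of_eq fun O n => by simp [FF, PFun.coe_val, Part.bind_some]; exact Part.bind_some _ _

lemma cval_eq_zero_iff (c : Nat.Partrec.Code) (w : ℕ) :
    cval c w = 0 ↔
      (Nat.Partrec.Code.evaln w.unpair.1.unpair.2.unpair.2 c
        (cantorPair w.unpair.2.unpair.1 w.unpair.1.unpair.1.unpair.2.unpair.2)).isSome ∧
      (Nat.Partrec.Code.evaln w.unpair.1.unpair.2.unpair.2 c
        (cantorPair w.unpair.2.unpair.1 w.unpair.2.unpair.2)).isSome := by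
  unfold cval
  rcases h1 : (Nat.Partrec.Code.evaln w.unpair.1.unpair.2.unpair.2 c
      (cantorPair w.unpair.2.unpair.1 w.unpair.1.unpair.1.unpair.2.unpair.2)).isSome <;>
    rcases h2 : (Nat.Partrec.Code.evaln w.unpair.1.unpair.2.unpair.2 c
      (cantorPair w.unpair.2.unpair.1 w.unpair.2.unpair.2)).isSome <;>
    simp

lemma checkF_eval (c : Nat.Partrec.Code) (φ : ℕ → ℕ) (u : ℕ) :
    checkF c (fun k => Part.some (φ k)) u =
      Part.some (cval c (Nat.pair u
        (Nat.pair (φ u.unpair.2.unpair.1) (φ (u.unpair.1.unpair.2.unpair.1 + 1))))) := by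
  simp [checkF, Part.bind_some]

lemma stepF_eval (c : Nat.Partrec.Code) (φ : ℕ → ℕ) (q : ℕ)
    (hex : ∃ s, cval c (Nat.pair (Nat.pair q s)
      (Nat.pair (φ s.unpair.1) (φ (q.unpair.2.unpair.1 + 1)))) = 0) :
    ∃ s, cval c (Nat.pair (Nat.pair q s)
        (Nat.pair (φ s.unpair.1) (φ (q.unpair.2.unpair.1 + 1)))) = 0 ∧
      stepF c (fun k => Part.some (φ k)) q = Part.some (φ s.unpair.1) := by
  set p : ℕ →. Bool :=
    fun s => (fun m => m = 0) <$> checkF c (fun k => Part.some (φ k)) (Nat.pair q s) with hpdef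
  have hp : ∀ s, p s = Part.some (decide (cval c (Nat.pair (Nat.pair q s)
      (Nat.pair (φ s.unpair.1) (φ (q.unpair.2.unpair.1 + 1)))) = 0)) := by
    intro s
    rw [hpdef]
    simp [checkF_eval, Nat.unpair_pair, Part.map_some]
  have hdom : (Nat.rfind p).Dom := by
    refine Nat.rfind_dom.2 ⟨hex.choose, ?_, fun {m} _ => by rw [hp]; trivial⟩
    rw [hp]
    simp [hex.choose_spec]
  set s₀ := (Nat.rfind p).get hdom with hs₀def
  have hs₀ : s₀ ∈ Nat.rfind p := Part.get_mem hdom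
  have htrue : true ∈ p s₀ := Nat.rfind_spec hs₀
  have hzero : cval c (Nat.pair (Nat.pair q s₀)
      (Nat.pair (φ s₀.unpair.1) (φ (q.unpair.2.unpair.1 + 1)))) = 0 := by
    rw [hp] at htrue
    simpa using htrue
  refine ⟨s₀, hzero, ?_⟩
  have hkey : stepF c (fun k => Part.some (φ k)) q
      = (Nat.rfind p).bind fun s => Part.some (φ s.unpair.1) := rfl
  rw [hkey, Part.eq_some_iff.2 hs₀, Part.bind_some]

lemma recF_zero (c : Nat.Partrec.Code) (φ : ℕ → ℕ) :
    recF c (fun k => Part.some (φ k)) (Nat.pair 0 0) = Part.some (φ 0) := by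
  simp [recF, Nat.unpaired]

lemma recF_succ (c : Nat.Partrec.Code) (O : ℕ →. ℕ) (n : ℕ) :
    recF c O (Nat.pair 0 (n + 1))
      = (recF c O (Nat.pair 0 n)).bind fun i => stepF c O (Nat.pair 0 (Nat.pair n i)) := by
  simp [recF, Nat.unpaired]

/-- Let `φ` be an oracle for a point `x` in an effective topology `(B, ν)`
with a recursively enumerable subset relation.  Then there exists a nested oracle `ψ`
for `x` in `(B, ν)` that is recursive relative to `φ`, uniformly in `φ`. -/
theorem nested_oracle_of_oracle {X : Type*} [TopologicalSpace X] [T0Space X]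
    (dom : Set ℕ) (code : ℕ → Set X)
    (hbasis : TopologicalSpace.IsTopologicalBasis (code '' dom))
    (hre : RESubsetRel dom code) :
    ∃ F : (ℕ →. ℕ) → ℕ →. ℕ, PartrecIn F ∧
      ∀ (x : X) (φ : ℕ → ℕ), IsOracleFor dom code x φ →
        ∃ ψ : ℕ → ℕ, (∀ n, F (fun k => Part.some (φ k)) n = Part.some (ψ n)) ∧
          IsNestedOracleFor dom code x ψ := by
  classical
  -- Extract a code for the r.e. subset relation.
  set pred : ℕ → Prop := fun p =>
    ∃ b₁ ∈ dom, ∃ b₂ ∈ dom, p = cantorPair b₁ b₂ ∧ code b₁ ⊆ code b₂ with hpreddef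
  have hfp : Partrec fun a : ℕ =>
      (Part.assert (pred a) fun _ => Part.some ()).map fun _ => (0 : ℕ) :=
    Partrec.map (by unfold RESubsetRel REPred at hre; exact hre) ((Computable.const 0).to₂)
  obtain ⟨c, hc⟩ := Nat.Partrec.Code.exists_code.1 (Partrec.nat_iff.1 hfp)
  have hDom : ∀ N, (Nat.Partrec.Code.eval c N).Dom ↔ pred N := by
    intro N
    rw [hc]
    simp [Part.assert]
  -- Halting characterizations.
  have hHalt₁ : ∀ b₁ b₂, b₁ ∈ dom → b₂ ∈ dom → code b₁ ⊆ code b₂ →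
      ∃ t, (Nat.Partrec.Code.evaln t c (cantorPair b₁ b₂)).isSome := by
    intro b₁ b₂ h₁ h₂ hsub
    have hD : (Nat.Partrec.Code.eval c (cantorPair b₁ b₂)).Dom :=
      (hDom _).2 ⟨b₁, h₁, b₂, h₂, rfl, hsub⟩
    obtain ⟨t, ht⟩ := Nat.Partrec.Code.evaln_complete.1 (Part.get_mem hD)
    exact ⟨t, by rw [Option.isSome_iff_exists]; exact ⟨_, ht⟩⟩
  have hHalt₂ : ∀ b₁ b₂ t, (Nat.Partrec.Code.evaln t c (cantorPair b₁ b₂)).isSome →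
      b₁ ∈ dom ∧ b₂ ∈ dom ∧ code b₁ ⊆ code b₂ := by
    intro b₁ b₂ t ht
    obtain ⟨v, hv⟩ := Option.isSome_iff_exists.1 ht
    have hD : (Nat.Partrec.Code.eval c (cantorPair b₁ b₂)).Dom :=
      Part.dom_iff_mem.2 ⟨v, Nat.Partrec.Code.evaln_sound hv⟩
    obtain ⟨a₁, ha₁, a₂, ha₂, heq, hsub⟩ := (hDom _).1 hD
    obtain ⟨e₁, e₂⟩ := cantorPair_inj heq.symm
    exact ⟨e₁ ▸ ha₁, e₂ ▸ ha₂, e₁ ▸ e₂ ▸ hsub⟩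
  refine ⟨FF c, partrecIn_FF c, ?_⟩
  intro x φ hφ
  have hdomφ : ∀ k, φ k ∈ dom := hφ.1
  have hmemφ : ∀ k, x ∈ code (φ k) := fun k => hφ.2.2.1 _ ⟨φ k, ⟨k, rfl⟩, rfl⟩
  -- The step lemma.
  have stepLem : ∀ n v, v ∈ dom → x ∈ code v →
      ∃ w, stepF c (fun k => Part.some (φ k)) (Nat.pair 0 (Nat.pair n v)) = Part.some w ∧
        (∃ k, w = φ k) ∧ code w ⊆ code v ∧ code w ⊆ code (φ (n + 1)) := by
    intro n v hv hxv
    set q := Nat.pair 0 (Nat.pair n v) with hq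
    have hqidx : q.unpair.2.unpair.1 = n := by simp [hq]
    have hqi : q.unpair.2.unpair.2 = v := by simp [hq]
    -- Existence of a successful search point.
    have hex : ∃ s, cval c (Nat.pair (Nat.pair q s)
        (Nat.pair (φ s.unpair.1) (φ (q.unpair.2.unpair.1 + 1)))) = 0 := by
      have hopen : IsOpen (code v ∩ code (φ (n + 1))) :=
        (hbasis.isOpen ⟨v, hv, rfl⟩).inter (hbasis.isOpen ⟨φ (n + 1), hdomφ _, rfl⟩)
      obtain ⟨b, hbB, hxb, hbsub⟩ :=
        hbasis.exists_subset_of_mem_open (Set.mem_inter hxv (hmemφ (n + 1))) hopen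
      obtain ⟨l, hl, hlb⟩ := hφ.2.2.2 b hbB hxb
      obtain ⟨w, ⟨m, rfl⟩, rfl⟩ := hl
      have hsub₁ : code (φ m) ⊆ code v := hlb.trans (hbsub.trans Set.inter_subset_left)
      have hsub₂ : code (φ m) ⊆ code (φ (n + 1)) :=
        hlb.trans (hbsub.trans Set.inter_subset_right)
      obtain ⟨t₁, ht₁⟩ := hHalt₁ (φ m) v (hdomφ m) hv hsub₁
      obtain ⟨t₂, ht₂⟩ := hHalt₁ (φ m) (φ (n + 1)) (hdomφ m) (hdomφ _) hsub₂
      refine ⟨Nat.pair m (max t₁ t₂), ?_⟩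
      rw [cval_eq_zero_iff]
      simp only [Nat.unpair_pair, hqi, hqidx]
      constructor
      · obtain ⟨v₁, hv₁⟩ := Option.isSome_iff_exists.1 ht₁
        exact Option.isSome_iff_exists.2
          ⟨v₁, Nat.Partrec.Code.evaln_mono (le_max_left t₁ t₂) hv₁⟩
      · obtain ⟨v₂, hv₂⟩ := Option.isSome_iff_exists.1 ht₂
        exact Option.isSome_iff_exists.2
          ⟨v₂, Nat.Partrec.Code.evaln_mono (le_max_right t₁ t₂) hv₂⟩
    obtain ⟨s, hs0, hsval⟩ := stepF_eval c φ q hex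
    rw [cval_eq_zero_iff] at hs0
    simp only [Nat.unpair_pair, hqi, hqidx] at hs0
    refine ⟨φ s.unpair.1, hsval, ⟨s.unpair.1, rfl⟩, ?_, ?_⟩
    · exact (hHalt₂ _ _ _ hs0.1).2.2
    · exact (hHalt₂ _ _ _ hs0.2).2.2
  -- Main induction: values, membership, and refinement of `φ`.
  have H : ∀ n, ∃ v, recF c (fun k => Part.some (φ k)) (Nat.pair 0 n) = Part.some v ∧
      v ∈ dom ∧ x ∈ code v ∧ code v ⊆ code (φ n) := by
    intro n
    induction n with
    | zero => exact ⟨φ 0, recF_zero c φ, hdomφ 0, hmemφ 0, subset_rfl⟩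
    | succ n ih =>
      obtain ⟨v, hval, hv, hxv, -⟩ := ih
      obtain ⟨w, hwval, ⟨k, hk⟩, hwv, hwφ⟩ := stepLem n v hv hxv
      refine ⟨w, ?_, ?_, ?_, hwφ⟩
      · rw [recF_succ c (fun k => Part.some (φ k)) n, hval, Part.bind_some, hwval]
      · exact hk ▸ hdomφ k
      · exact hk ▸ hmemφ k
  choose ψ hψval hψdom hψmem hψsub using H
  -- Nestedness.
  have hnest : ∀ n, code (ψ (n + 1)) ⊆ code (ψ n) := by
    intro n
    obtain ⟨w, hwval, -, hwv, -⟩ := stepLem n (ψ n) (hψdom n) (hψmem n)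
    have : recF c (fun k => Part.some (φ k)) (Nat.pair 0 (n + 1)) = Part.some w := by
      rw [recF_succ c (fun k => Part.some (φ k)) n, hψval n, Part.bind_some, hwval]
    have hw : w = ψ (n + 1) := by
      have := this.symm.trans (hψval (n + 1))
      exact Part.some_injective this
    exact hw ▸ hwv
  refine ⟨ψ, fun n => hψval n, ⟨⟨hψdom, ?_, ?_, ?_⟩, hnest⟩⟩
  · rintro l ⟨w, ⟨k, rfl⟩, rfl⟩
    exact ⟨ψ k, hψdom k, rfl⟩
  · rintro l ⟨w, ⟨k, rfl⟩, rfl⟩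
    exact hψmem k
  · intro b hb hxb
    obtain ⟨l, ⟨w, ⟨m, rfl⟩, rfl⟩, hlb⟩ := hφ.2.2.2 b hb hxb
    exact ⟨code (ψ m), ⟨ψ m, ⟨m, rfl⟩, rfl⟩, (hψsub m).trans hlb⟩
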